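/- An additive quaternary [12,6,6]_4 code whose weight distribution is A_0=1, A_6=396, A_8=1485, A_10=1980, A_12=234 is self-dual with respect to the symplectic (trace) inner product on (F_2^2)^{12}, and hence is a quantum stabilizer [[12,0,6]]_2 code. -/

import Mathlib

open Finset


/-- The quaternary weight of a word in `(𝔽₂²)ⁿ`. -/
noncomputable def qWt {n : ℕ} (x : Fin n → ZMod 2 × ZMod 2) : ℕ := {i | x i ≠ 0}.ncard

/-- `A C i` is the number of codewords of weight `i` in `C`. -/
noncomputable def A {n : ℕ} (C : Submodule (ZMod 2) (Fin n → ZMod 2 × ZMod 2)) (i : ℕ) : ℕ :=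
  {x : Fin n → ZMod 2 × ZMod 2 | x ∈ C ∧ qWt x = i}.ncard

/-- The symplectic (trace) inner product on `(𝔽₂²)ⁿ`. -/
def symp {n : ℕ} (x y : Fin n → ZMod 2 × ZMod 2) : ZMod 2 :=
  ∑ i, ((x i).1 * (y i).2 + (x i).2 * (y i).1)

lemma qWt_eq_card {n : ℕ} (x : Fin n → ZMod 2 × ZMod 2) :
    qWt x = (univ.filter (fun i => x i ≠ 0)).card := by
  classical
  rw [qWt, Set.ncard_eq_toFinset_card', Set.toFinset_setOf]

lemma qWt_le {n : ℕ} (x : Fin n → ZMod 2 × ZMod 2) : qWt x ≤ n := by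
  classical
  rw [qWt_eq_card]
  simpa using (Finset.card_filter_le univ (fun i => x i ≠ 0))

lemma coord_parity (a b : ZMod 2 × ZMod 2) :
    (if a + b ≠ 0 then (1:ZMod 2) else 0) =
      (if a ≠ 0 then (1:ZMod 2) else 0) + (if b ≠ 0 then (1:ZMod 2) else 0) + (a.1*b.2 + a.2*b.1) := by
  revert a b; decide

lemma key_parity {n : ℕ} (x y : Fin n → ZMod 2 × ZMod 2) :
    ((qWt (x + y) : ZMod 2)) = (qWt x : ZMod 2) + (qWt y : ZMod 2) + symp x y := by
  classical
  have h : ∀ z : Fin n → ZMod 2 × ZMod 2,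
      ((qWt z : ZMod 2)) = ∑ i, (if z i ≠ 0 then (1:ZMod 2) else 0) := by
    intro z
    rw [qWt_eq_card, Finset.card_filter]
    push_cast
    simp
  rw [h, h, h, symp, ← Finset.sum_add_distrib, ← Finset.sum_add_distrib]
  refine Finset.sum_congr rfl fun i _ => ?_
  simpa using coord_parity (x i) (y i)

section
variable {n : ℕ} (C : Submodule (ZMod 2) (Fin n → ZMod 2 × ZMod 2))

open Classical in
lemma A_eq (i : ℕ) :
    A C i = ((univ.filter (fun x : Fin n → ZMod 2 × ZMod 2 => x ∈ C)).filter
      (fun x => qWt x = i)).card := by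
  rw [A, Set.ncard_eq_toFinset_card', Set.toFinset_setOf, Finset.filter_filter]

open Classical in
lemma card_eq_sum_A :
    Fintype.card C = ∑ i ∈ Finset.range (n+1), A C i := by
  have h1 : Fintype.card C =
      (univ.filter (fun x : Fin n → ZMod 2 × ZMod 2 => x ∈ C)).card := by
    rw [Fintype.card_subtype]
  rw [h1, Finset.card_eq_sum_card_fiberwise (f := qWt) (t := Finset.range (n+1))
    (fun x _ => Finset.mem_range.2 (Nat.lt_succ_of_le (qWt_le x)))]
  exact Finset.sum_congr rfl fun i _ => (A_eq C i).symm

end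

/-- The symplectic form as a bilinear form. -/
def B {n : ℕ} : LinearMap.BilinForm (ZMod 2) (Fin n → ZMod 2 × ZMod 2) :=
  LinearMap.mk₂ (ZMod 2) symp
    (fun x x' y => by
      simp only [symp, ← Finset.sum_add_distrib, Pi.add_apply, Prod.fst_add, Prod.snd_add]
      exact Finset.sum_congr rfl fun i _ => by ring)
    (fun c x y => by
      simp only [symp, Finset.mul_sum, Pi.smul_apply, Prod.smul_fst, Prod.smul_snd,
        smul_eq_mul]
      exact Finset.sum_congr rfl fun i _ => by ring)
    (fun x y y' => by
      simp only [symp, ← Finset.sum_add_distrib, Pi.add_apply, Prod.fst_add, Prod.snd_add]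
      exact Finset.sum_congr rfl fun i _ => by ring)
    (fun c x y => by
      simp only [symp, Finset.mul_sum, Pi.smul_apply, Prod.smul_fst, Prod.smul_snd,
        smul_eq_mul]
      exact Finset.sum_congr rfl fun i _ => by ring)

lemma B_apply {n : ℕ} (x y : Fin n → ZMod 2 × ZMod 2) : B x y = symp x y := rfl

lemma B_refl {n : ℕ} : (B (n := n)).IsRefl := by
  intro x y h
  rw [B_apply] at *
  rw [symp] at *
  rw [← h]
  exact Finset.sum_congr rfl fun i _ => by ring

lemma B_nondegen {n : ℕ} : (B (n := n)).Nondegenerate := by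
  refine (LinearMap.IsRefl.nondegenerate_iff_separatingLeft B_refl).2 ?_
  intro x hx
  by_contra hne
  obtain ⟨i, hi⟩ : ∃ i, x i ≠ 0 := by
    by_contra h
    push_neg at h
    exact hne (funext fun i => h i)
  have hb : ∃ b : ZMod 2 × ZMod 2, (x i).1 * b.2 + (x i).2 * b.1 = 1 := by
    revert hi
    generalize x i = a
    revert a
    decide
  obtain ⟨b, hbv⟩ := hb
  have := hx (Pi.single i b)
  rw [B_apply, symp] at this
  rw [Finset.sum_eq_single i (fun j _ hj => by simp [Pi.single_eq_of_ne hj])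
    (fun h => absurd (Finset.mem_univ i) h)] at this
  simp only [Pi.single_eq_same] at this
  rw [hbv] at this
  exact one_ne_zero this

/-- An additive `[12,6,6]₄` code whose weight distribution is
`A₀=1, A₆=396, A₈=1485, A₁₀=1980, A₁₂=234` is self-dual with respect to the
symplectic inner product (hence is a quantum `[[12,0,6]]₂` stabilizer code). -/
theorem quantum_case_is_selfdual
    (C : Submodule (ZMod 2) (Fin 12 → ZMod 2 × ZMod 2))
    (hdim : Module.finrank (ZMod 2) C = 12)
    (hd : ∀ x ∈ C, x ≠ 0 → 6 ≤ qWt x)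
    (hwd : A C 0 = 1 ∧ A C 6 = 396 ∧ A C 8 = 1485 ∧ A C 10 = 1980 ∧ A C 12 = 234) :
    ∀ y, y ∈ C ↔ ∀ x ∈ C, symp x y = 0 := by
  classical
  obtain ⟨h0, h6, h8, h10, h12⟩ := hwd
  have hcard : Fintype.card C = 4096 := by
    rw [Module.card_eq_pow_finrank (K := ZMod 2), hdim, ZMod.card]
    norm_num
  have hsum := card_eq_sum_A C
  rw [hcard] at hsum
  have hApos : ∀ x ∈ C, 1 ≤ A C (qWt x) := by
    intro x hx
    have : x ∈ {z : Fin 12 → ZMod 2 × ZMod 2 | z ∈ C ∧ qWt z = qWt x} := ⟨hx, rfl⟩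
    have := (Set.ncard_pos (Set.toFinite _)).2 ⟨x, this⟩
    exact this
  -- the odd-weight counts vanish
  have hodd : A C 7 = 0 ∧ A C 9 = 0 ∧ A C 11 = 0 := by
    simp only [Finset.sum_range_succ, Finset.sum_range_zero] at hsum
    omega
  -- every codeword has even weight
  have heven : ∀ x ∈ C, ((qWt x : ℕ) : ZMod 2) = 0 := by
    intro x hx
    have hle12 := qWt_le x
    have hmod : qWt x % 2 = 0 := by
      by_cases hx0 : x = 0
      · subst hx0
        have : qWt (0 : Fin 12 → ZMod 2 × ZMod 2) = 0 := by
          simp [qWt]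
        omega
      · have h6le := hd x hx hx0
        have hp := hApos x hx
        obtain ⟨hA7, hA9, hA11⟩ := hodd
        interval_cases h : qWt x <;> omega
    rw [ZMod.natCast_eq_zero_iff]
    omega
  -- C is self-orthogonal
  have hle : C ≤ (B (n := 12)).orthogonal C := by
    intro y hy
    rw [LinearMap.BilinForm.mem_orthogonal_iff]
    intro x hx
    have hk := key_parity x y
    rw [heven x hx, heven y hy, heven (x + y) (C.add_mem hx hy)] at hk
    have : symp x y = 0 := by linear_combination -hk
    exact this
  have hV : Module.finrank (ZMod 2) (Fin 12 → ZMod 2 × ZMod 2) = 24 := by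
    simp [Module.finrank_pi_fintype, Module.finrank_prod, Module.finrank_self]
  have horth : Module.finrank (ZMod 2) ((B (n := 12)).orthogonal C) = 12 := by
    rw [LinearMap.BilinForm.finrank_orthogonal B_nondegen C, hdim, hV]
  have heq : C = (B (n := 12)).orthogonal C :=
    Submodule.eq_of_le_of_finrank_le hle (by rw [horth, hdim])
  intro y
  constructor
  · intro hy x hx
    exact (LinearMap.BilinForm.mem_orthogonal_iff.1 (heq ▸ hy)) x hx
  · intro h
    rw [heq, LinearMap.BilinForm.mem_orthogonal_iff]
    intro x hx
    exact h x hx
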